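/- The set Γ(a,b,X_0) is empty if and only if there exist subsets A ⊆ {1,…,p} and B ⊆ {1,…,q} such that X_0(i,j) = 0 for all (i,j) ∈ A×B and a(A) > b(B^c). -/

import Mathlib

open Filter Topology

namespace IPFP

variable {p q : ℕ}

/-- Row sums `X(i,+)`. -/
noncomputable def rowSum (X : Matrix (Fin p) (Fin q) ℝ) (i : Fin p) : ℝ := ∑ j, X i j

/-- Column sums `X(+,j)`. -/
noncomputable def colSum (X : Matrix (Fin p) (Fin q) ℝ) (j : Fin q) : ℝ := ∑ i, X i j

/-- `R_i(X) = X(i,+)/a_i`. -/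
noncomputable def Rrat (a : Fin p → ℝ) (X : Matrix (Fin p) (Fin q) ℝ) (i : Fin p) : ℝ :=
  rowSum X i / a i

/-- `C_j(X) = X(+,j)/b_j`. -/
noncomputable def Crat (b : Fin q → ℝ) (X : Matrix (Fin p) (Fin q) ℝ) (j : Fin q) : ℝ :=
  colSum X j / b j

/-- `T_R(X)(i,j) = X(i,j)/R_i(X)`. -/
noncomputable def TR (a : Fin p → ℝ) (X : Matrix (Fin p) (Fin q) ℝ) :
    Matrix (Fin p) (Fin q) ℝ :=
  fun i j => X i j / Rrat a X i

/-- `T_C(X)(i,j) = X(i,j)/C_j(X)`. -/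
noncomputable def TC (b : Fin q → ℝ) (X : Matrix (Fin p) (Fin q) ℝ) :
    Matrix (Fin p) (Fin q) ℝ :=
  fun i j => X i j / Crat b X j

/-- The IPFP sequence: `X_0 = X0`, `X_{2n+1} = T_R(X_{2n})`, `X_{2n+2} = T_C(X_{2n+1})`. -/
noncomputable def ipfp (a : Fin p → ℝ) (b : Fin q → ℝ) (X0 : Matrix (Fin p) (Fin q) ℝ) :
    ℕ → Matrix (Fin p) (Fin q) ℝ
  | 0 => X0
  | n + 1 => if Even n then TR a (ipfp a b X0 n) else TC b (ipfp a b X0 n)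

/-- Membership in `Γ₀`: nonnegative entries, positive row and column sums. -/
def memGamma0 (X : Matrix (Fin p) (Fin q) ℝ) : Prop :=
  (∀ i j, 0 ≤ X i j) ∧ (∀ i, 0 < rowSum X i) ∧ (∀ j, 0 < colSum X j)

/-- Membership in `Γ₁`: member of `Γ₀` with total sum `1`. -/
def memGamma1 (X : Matrix (Fin p) (Fin q) ℝ) : Prop :=
  memGamma0 X ∧ ∑ i, ∑ j, X i j = 1

/-- Membership in `Γ(a,b)`: member of `Γ₀` with row marginals `a` and column marginals `b`. -/
def memGamma (a : Fin p → ℝ) (b : Fin q → ℝ) (X : Matrix (Fin p) (Fin q) ℝ) : Prop :=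
  memGamma0 X ∧ (∀ i, rowSum X i = a i) ∧ (∀ j, colSum X j = b j)

/-- `Supp(X) ⊆ Supp(Y)`. -/
def suppSubset (X Y : Matrix (Fin p) (Fin q) ℝ) : Prop :=
  ∀ i j, 0 < X i j → 0 < Y i j

/-- Membership in `Γ(a,b,X0)`: member of `Γ(a,b)` with support contained in `Supp(X0)`. -/
def memGammaSub (a : Fin p → ℝ) (b : Fin q → ℝ) (X0 X : Matrix (Fin p) (Fin q) ℝ) : Prop :=
  memGamma a b X ∧ suppSubset X X0

/-- Relative entropy (I-divergence) `D(Y‖X) = Σ_{(i,j) ∈ Supp X} Y(i,j)·ln(Y(i,j)/X(i,j))`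
(finite expression; it agrees with the relative entropy whenever `Supp Y ⊆ Supp X`,
with the convention `0·ln 0 = 0`). -/
noncomputable def relEnt (Y X : Matrix (Fin p) (Fin q) ℝ) : ℝ :=
  ∑ i, ∑ j, if 0 < X i j then Y i j * Real.log (Y i j / X i j) else 0

/-- A real sequence converges to `l` at an at least geometric rate:
it tends to `l` and `limsup_n |x_n − l|^{1/n} < 1`. -/
noncomputable def geomSeq (x : ℕ → ℝ) (l : ℝ) : Prop :=
  Tendsto x atTop (nhds l) ∧
    Filter.limsup (fun n : ℕ => |x n - l| ^ ((n : ℝ)⁻¹)) atTop < 1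

/-- A matrix sequence converges to `L` at an at least geometric rate (using the
`ℓ¹` norm on entries): it tends to `L` and `limsup_n ‖X_n − L‖^{1/n} < 1`. -/
noncomputable def geomMat (X : ℕ → Matrix (Fin p) (Fin q) ℝ)
    (L : Matrix (Fin p) (Fin q) ℝ) : Prop :=
  Tendsto X atTop (nhds L) ∧
    Filter.limsup (fun n : ℕ => (∑ i, ∑ j, |X n i j - L i j|) ^ ((n : ℝ)⁻¹)) atTop < 1

end IPFP
section GaleAux

open Finset

variable {p q : ℕ}

/-- Total sum of a matrix. -/
noncomputable def totalSum (X : Matrix (Fin p) (Fin q) ℝ) : ℝ := ∑ i, ∑ j, X i j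

lemma totalSum_eq_sum_rowSum (X : Matrix (Fin p) (Fin q) ℝ) :
    totalSum X = ∑ i, IPFP.rowSum X i := rfl

lemma totalSum_eq_sum_colSum (X : Matrix (Fin p) (Fin q) ℝ) :
    totalSum X = ∑ j, IPFP.colSum X j := Finset.sum_comm

/-- The feasible polytope: nonneg, support in `Supp X0`, row sums `≤ a`, col sums `≤ b`. -/
def Phi (a : Fin p → ℝ) (b : Fin q → ℝ) (X0 : Matrix (Fin p) (Fin q) ℝ) :
    Set (Matrix (Fin p) (Fin q) ℝ) :=
  {M | (∀ i j, 0 ≤ M i j) ∧ (∀ i j, X0 i j = 0 → M i j = 0) ∧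
    (∀ i, IPFP.rowSum M i ≤ a i) ∧ (∀ j, IPFP.colSum M j ≤ b j)}

/-- Add `t` to the `(i,j)` entry. -/
noncomputable def bump (M : Matrix (Fin p) (Fin q) ℝ) (i : Fin p) (j : Fin q) (t : ℝ) :
    Matrix (Fin p) (Fin q) ℝ :=
  fun i' j' => if i' = i ∧ j' = j then M i' j' + t else M i' j'

lemma bump_apply (M : Matrix (Fin p) (Fin q) ℝ) (i : Fin p) (j : Fin q) (t : ℝ) (i' j') :
    bump M i j t i' j' = M i' j' + (if i' = i ∧ j' = j then t else 0) := by
  unfold bump; split <;> simp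

lemma rowSum_bump (M : Matrix (Fin p) (Fin q) ℝ) (i : Fin p) (j : Fin q) (t : ℝ) (i' : Fin p) :
    IPFP.rowSum (bump M i j t) i' = IPFP.rowSum M i' + (if i' = i then t else 0) := by
  unfold IPFP.rowSum
  simp only [bump_apply, Finset.sum_add_distrib]
  congr 1
  by_cases h : i' = i
  · simp [h, Finset.sum_ite_eq' Finset.univ j]
  · simp [h]

lemma colSum_bump (M : Matrix (Fin p) (Fin q) ℝ) (i : Fin p) (j : Fin q) (t : ℝ) (j' : Fin q) :
    IPFP.colSum (bump M i j t) j' = IPFP.colSum M j' + (if j' = j then t else 0) := by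
  unfold IPFP.colSum
  simp only [bump_apply, Finset.sum_add_distrib]
  congr 1
  by_cases h : j' = j
  · simp [h, Finset.sum_ite_eq' Finset.univ i]
  · simp [h]

lemma totalSum_bump (M : Matrix (Fin p) (Fin q) ℝ) (i : Fin p) (j : Fin q) (t : ℝ) :
    totalSum (bump M i j t) = totalSum M + t := by
  simp only [totalSum_eq_sum_rowSum, rowSum_bump, Finset.sum_add_distrib]
  congr 1
  simp [Finset.sum_ite_eq' Finset.univ i]

/-- Alternating-path reachability for the flow augmentation argument. -/
inductive Reach (X0 M : Matrix (Fin p) (Fin q) ℝ) (i0 : Fin p) : Fin p ⊕ Fin q → Prop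
  | start : Reach X0 M i0 (Sum.inl i0)
  | fwd {i j} : Reach X0 M i0 (Sum.inl i) → 0 < X0 i j → Reach X0 M i0 (Sum.inr j)
  | bwd {i j} : Reach X0 M i0 (Sum.inr j) → 0 < M i j → Reach X0 M i0 (Sum.inl i)

/-- Row property: can reroute flow to create slack at row `i`, keeping total sum. -/
def Qrow (a : Fin p → ℝ) (b : Fin q → ℝ) (X0 M : Matrix (Fin p) (Fin q) ℝ) (i : Fin p) : Prop :=
  ∀ ε > (0:ℝ), ∃ η, ∃ M' : Matrix (Fin p) (Fin q) ℝ, 0 < η ∧ η ≤ ε ∧ M' ∈ Phi a b X0 ∧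
    totalSum M' = totalSum M ∧ IPFP.rowSum M' i ≤ a i - η ∧
    ∀ i' j', |M' i' j' - M i' j'| ≤ ε

/-- Column property: can push `η` extra units of flow into column `j`. -/
def Qcol (a : Fin p → ℝ) (b : Fin q → ℝ) (X0 M : Matrix (Fin p) (Fin q) ℝ) (j : Fin q) : Prop :=
  ∀ ε > (0:ℝ), ∃ η, ∃ N : Matrix (Fin p) (Fin q) ℝ, 0 < η ∧ η ≤ ε ∧
    (∀ i' j', 0 ≤ N i' j') ∧ (∀ i' j', X0 i' j' = 0 → N i' j' = 0) ∧
    (∀ i', IPFP.rowSum N i' ≤ a i') ∧ (∀ j', j' ≠ j → IPFP.colSum N j' ≤ b j') ∧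
    IPFP.colSum N j ≤ b j + η ∧ totalSum N = totalSum M + η ∧
    ∀ i' j', |N i' j' - M i' j'| ≤ ε

lemma reach_Q (a : Fin p → ℝ) (b : Fin q → ℝ) (X0 M : Matrix (Fin p) (Fin q) ℝ) (i0 : Fin p)
    (hM : M ∈ Phi a b X0) (hi0 : IPFP.rowSum M i0 < a i0) :
    ∀ v, Reach X0 M i0 v → Sum.elim (Qrow a b X0 M) (Qcol a b X0 M) v := by
  intro v h
  induction h with
  | start =>
    intro ε hε
    refine ⟨min ε (a i0 - IPFP.rowSum M i0), M, lt_min hε (by linarith), min_le_left _ _, hM,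
      rfl, ?_, fun i' j' => by simp [hε.le]⟩
    have := min_le_right ε (a i0 - IPFP.rowSum M i0)
    linarith
  | @fwd i j _ hx ih =>
    intro ε hε
    obtain ⟨η, M', hη0, hηε, ⟨hM'0, hM's, hM'r, hM'c⟩, htot', hrow', hclose'⟩ :=
      ih (ε/2) (by linarith)
    refine ⟨η, bump M' i j η, hη0, by linarith, ?_, ?_, ?_, ?_, ?_, ?_, ?_⟩
    · intro i' j'
      rw [bump_apply]
      have := hM'0 i' j'
      split <;> [linarith; linarith]
    · intro i' j' h0
      rw [bump_apply]
      split
      · next hc => exact absurd h0 (by rw [hc.1, hc.2]; exact hx.ne')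
      · simp [hM's i' j' h0]
    · intro i'
      rw [rowSum_bump]
      by_cases h : i' = i
      · subst h; have := hrow'; simp; linarith
      · simp [h]; exact hM'r i'
    · intro j' hj'
      rw [colSum_bump]
      simp [hj']; exact hM'c j'
    · rw [colSum_bump]; simp; linarith [hM'c j]
    · rw [totalSum_bump, htot']
    · intro i' j'
      rw [bump_apply]
      have := hclose' i' j'
      split
      · rw [abs_le] at this ⊢; constructor <;> [linarith; linarith]
      · simpa using le_trans this (by linarith)
  | @bwd i j _ hm ih =>
    intro ε hε
    have hε' : (0:ℝ) < min (ε/2) (M i j / 2) := lt_min (by linarith) (by linarith)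
    obtain ⟨η, N, hη0, hηε, hN0, hNs, hNr, hNc, hNcj, htotN, hcloseN⟩ :=
      ih (min (ε/2) (M i j / 2)) hε'
    have hη2 : η ≤ ε/2 := le_trans hηε (min_le_left _ _)
    have hηm : η ≤ M i j / 2 := le_trans hηε (min_le_right _ _)
    have hNij : M i j - min (ε/2) (M i j / 2) ≤ N i j := by
      have := hcloseN i j; rw [abs_le] at this; linarith
    have hNijb : η ≤ N i j := by
      have h1 := min_le_right (ε/2) (M i j / 2); linarith
    refine ⟨η, bump N i j (-η), hη0, by linarith, ⟨?_, ?_, ?_, ?_⟩, ?_, ?_, ?_⟩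
    · intro i' j'
      rw [bump_apply]
      have := hN0 i' j'
      split
      · next hc => rw [hc.1, hc.2]; linarith
      · linarith
    · intro i' j' h0
      rw [bump_apply]
      split
      · next hc =>
        exfalso
        rw [hc.1, hc.2] at h0
        exact hm.ne' ((hM.2.1) i j h0)
      · simp [hNs i' j' h0]
    · intro i'
      rw [rowSum_bump]
      by_cases h : i' = i
      · simp [h]; have := hNr i; linarith
      · simp [h]; exact hNr i'
    · intro j'
      rw [colSum_bump]
      by_cases h : j' = j
      · subst h; simp; linarith
      · simp [h]; exact hNc j' h
    · rw [totalSum_bump, htotN]; ring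
    · rw [rowSum_bump]; simp; have := hNr i; linarith
    · intro i' j'
      rw [bump_apply]
      have h1 := hcloseN i' j'
      have h2 := min_le_left (ε/2) (M i j / 2)
      split
      · rw [abs_le] at h1 ⊢; constructor <;> [linarith; linarith]
      · simp only [add_zero]; exact le_trans h1 (by linarith)

end GaleAux
section GaleAux2

open Finset

variable {p q : ℕ}

lemma continuous_entry (i : Fin p) (j : Fin q) :
    Continuous fun M : Matrix (Fin p) (Fin q) ℝ => M i j :=
  (continuous_apply j).comp (continuous_apply i)

lemma continuous_rowSum (i : Fin p) :
    Continuous fun M : Matrix (Fin p) (Fin q) ℝ => IPFP.rowSum M i := by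
  unfold IPFP.rowSum; exact continuous_finset_sum _ fun j _ => continuous_entry i j

lemma continuous_colSum (j : Fin q) :
    Continuous fun M : Matrix (Fin p) (Fin q) ℝ => IPFP.colSum M j := by
  unfold IPFP.colSum; exact continuous_finset_sum _ fun i _ => continuous_entry i j

lemma continuous_totalSum :
    Continuous fun M : Matrix (Fin p) (Fin q) ℝ => totalSum M := by
  unfold totalSum
  exact continuous_finset_sum _ fun i _ => continuous_finset_sum _ fun j _ => continuous_entry i j

lemma isClosed_Phi (a : Fin p → ℝ) (b : Fin q → ℝ) (X0 : Matrix (Fin p) (Fin q) ℝ) :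
    IsClosed (Phi a b X0) := by
  have h : Phi a b X0 =
      (⋂ i, ⋂ j, {M : Matrix (Fin p) (Fin q) ℝ | 0 ≤ M i j}) ∩
      ((⋂ i, ⋂ j, {M : Matrix (Fin p) (Fin q) ℝ | X0 i j = 0 → M i j = 0}) ∩
      ((⋂ i, {M : Matrix (Fin p) (Fin q) ℝ | IPFP.rowSum M i ≤ a i}) ∩
       (⋂ j, {M : Matrix (Fin p) (Fin q) ℝ | IPFP.colSum M j ≤ b j}))) := by
    ext M
    simp only [Phi, Set.mem_setOf_eq, Set.mem_inter_iff, Set.mem_iInter]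
  rw [h]
  refine IsClosed.inter ?_ (IsClosed.inter ?_ (IsClosed.inter ?_ ?_))
  · exact isClosed_iInter fun i => isClosed_iInter fun j =>
      isClosed_le continuous_const (continuous_entry i j)
  · refine isClosed_iInter fun i => isClosed_iInter fun j => ?_
    by_cases h0 : X0 i j = 0
    · have : {M : Matrix (Fin p) (Fin q) ℝ | X0 i j = 0 → M i j = 0}
          = {M : Matrix (Fin p) (Fin q) ℝ | M i j = 0} := by
        ext M; simp [h0]
      rw [this]; exact isClosed_eq (continuous_entry i j) continuous_const
    · have : {M : Matrix (Fin p) (Fin q) ℝ | X0 i j = 0 → M i j = 0} = Set.univ := by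
        ext M; simp [h0]
      rw [this]; exact isClosed_univ
  · exact isClosed_iInter fun i => isClosed_le (continuous_rowSum i) continuous_const
  · exact isClosed_iInter fun j => isClosed_le (continuous_colSum j) continuous_const

lemma exists_max (a : Fin p → ℝ) (b : Fin q → ℝ) (X0 : Matrix (Fin p) (Fin q) ℝ)
    (ha : ∀ i, 0 < a i) (hb : ∀ j, 0 < b j) (hsa : ∑ i, a i = 1) :
    ∃ M ∈ Phi a b X0, ∀ N ∈ Phi a b X0, totalSum N ≤ totalSum M := by
  have hK : IsCompact (Set.pi Set.univ
      (fun _ : Fin p => Set.pi Set.univ (fun _ : Fin q => Set.Icc (0:ℝ) 1)) :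
      Set (Matrix (Fin p) (Fin q) ℝ)) :=
    isCompact_univ_pi fun _ => isCompact_univ_pi fun _ => isCompact_Icc
  have hsub : Phi a b X0 ⊆ Set.pi Set.univ
      (fun _ : Fin p => Set.pi Set.univ (fun _ : Fin q => Set.Icc (0:ℝ) 1)) := by
    rintro M ⟨h0, _, hr, _⟩ i _ 
    intro j _
    refine ⟨h0 i j, ?_⟩
    have h1 : M i j ≤ IPFP.rowSum M i :=
      Finset.single_le_sum (fun j' _ => h0 i j') (Finset.mem_univ j)
    have h2 : a i ≤ 1 := by
      rw [← hsa]
      exact Finset.single_le_sum (fun i' _ => (ha i').le) (Finset.mem_univ i)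
    linarith [hr i]
  have hcompact : IsCompact (Phi a b X0) :=
    hK.of_isClosed_subset (isClosed_Phi a b X0) hsub
  have hne : (Phi a b X0).Nonempty := by
    refine ⟨0, fun i j => le_refl 0, fun i j _ => rfl, ?_, ?_⟩
    · intro i; have : IPFP.rowSum (0 : Matrix (Fin p) (Fin q) ℝ) i = 0 := by
        simp [IPFP.rowSum]
      rw [this]; exact (ha i).le
    · intro j; have : IPFP.colSum (0 : Matrix (Fin p) (Fin q) ℝ) j = 0 := by
        simp [IPFP.colSum]
      rw [this]; exact (hb j).le
  obtain ⟨M, hM, hmax⟩ := hcompact.exists_isMaxOn hne continuous_totalSum.continuousOn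
  exact ⟨M, hM, fun N hN => hmax hN⟩

end GaleAux2


open IPFP

/-- `Γ(a,b,X_0)` is empty iff there are subsets `A ⊆ {1,…,p}` and
`B ⊆ {1,…,q}` with `X_0 = 0` on `A × B` and `a(A) > b(Bᶜ)`. -/
theorem gammaSub_empty_iff
    (p q : ℕ) (hp : 2 ≤ p) (hq : 2 ≤ q)
    (a : Fin p → ℝ) (b : Fin q → ℝ)
    (ha : ∀ i, 0 < a i) (hb : ∀ j, 0 < b j)
    (hsa : ∑ i, a i = 1) (hsb : ∑ j, b j = 1)
    (X0 : Matrix (Fin p) (Fin q) ℝ) (hX0 : memGamma0 X0) :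
    (¬ ∃ S, memGammaSub a b X0 S) ↔
      ∃ (A : Finset (Fin p)) (B : Finset (Fin q)),
        (∀ i ∈ A, ∀ j ∈ B, X0 i j = 0) ∧ (∑ j ∈ Bᶜ, b j) < ∑ i ∈ A, a i := by
  classical
  constructor
  · intro hne
    obtain ⟨M, hMPhi, hmax⟩ := exists_max a b X0 ha hb hsa
    obtain ⟨hM0, hMs, hMr, hMc⟩ := hMPhi
    have hsupp : suppSubset M X0 := by
      intro i j h
      rcases (hX0.1 i j).lt_or_eq with h' | h'
      · exact h'
      · exact absurd (hMs i j h'.symm) h.ne'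
    have htotle : totalSum M ≤ 1 := by
      rw [totalSum_eq_sum_rowSum, ← hsa]
      exact Finset.sum_le_sum fun i _ => hMr i
    rcases eq_or_lt_of_le htotle with heq | hlt
    · exfalso
      apply hne
      have hre : ∀ i, rowSum M i = a i := by
        have h1 : ∑ i, rowSum M i = ∑ i, a i := by
          rw [← totalSum_eq_sum_rowSum, heq, hsa]
        have := (Finset.sum_eq_sum_iff_of_le (fun i _ => hMr i)).mp h1
        exact fun i => this i (Finset.mem_univ i)
      have hce : ∀ j, colSum M j = b j := by
        have h1 : ∑ j, colSum M j = ∑ j, b j := by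
          rw [← totalSum_eq_sum_colSum, heq, hsb]
        have := (Finset.sum_eq_sum_iff_of_le (fun j _ => hMc j)).mp h1
        exact fun j => this j (Finset.mem_univ j)
      exact ⟨M, ⟨⟨hM0, fun i => (hre i).symm ▸ ha i, fun j => (hce j).symm ▸ hb j⟩,
        hre, hce⟩, hsupp⟩
    · obtain ⟨i0, hi0⟩ : ∃ i0, rowSum M i0 < a i0 := by
        by_contra h
        push_neg at h
        have : (1:ℝ) ≤ totalSum M := by
          rw [totalSum_eq_sum_rowSum, ← hsa]
          exact Finset.sum_le_sum fun i _ => h i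
        linarith
      have hQ := reach_Q a b X0 M i0 ⟨hM0, hMs, hMr, hMc⟩ hi0
      have hsat : ∀ j, Reach X0 M i0 (Sum.inr j) → colSum M j = b j := by
        intro j hj
        by_contra hne'
        have hcl : colSum M j < b j := lt_of_le_of_ne (hMc j) hne'
        set s := b j - colSum M j with hs
        have hspos : 0 < s := by simp only [hs]; linarith
        have hp1 : (0:ℝ) < (p:ℝ) + 1 := by positivity
        obtain ⟨η, N, hη0, hηε, hN0, hNs, hNr, hNc, hNcj, htotN, hcloseN⟩ :=
          hQ _ hj (s / ((p:ℝ)+1)) (by positivity)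
        have hcolN : colSum N j ≤ colSum M j + (p:ℝ) * (s/((p:ℝ)+1)) := by
          unfold IPFP.colSum
          have h1 : ∑ i, N i j ≤ ∑ i, (M i j + s/((p:ℝ)+1)) :=
            Finset.sum_le_sum fun i _ => by
              have := hcloseN i j; rw [abs_le] at this; linarith [this.2]
          rw [Finset.sum_add_distrib, Finset.sum_const, Finset.card_univ,
            Fintype.card_fin, nsmul_eq_mul] at h1
          exact h1
        have hNj : colSum N j ≤ b j := by
          have hx : 0 < s/((p:ℝ)+1) := by positivity
          have key : ((p:ℝ)+1) * (s/((p:ℝ)+1)) = s := by field_simp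
          have h2 : (p:ℝ) * (s/((p:ℝ)+1)) = ((p:ℝ)+1) * (s/((p:ℝ)+1)) - s/((p:ℝ)+1) := by
            ring
          rw [h2, key] at hcolN
          simp only [hs] at hcolN hx ⊢
          linarith
        have hNPhi : N ∈ Phi a b X0 := by
          refine ⟨hN0, hNs, hNr, fun j' => ?_⟩
          by_cases h : j' = j
          · subst h; exact hNj
          · exact hNc j' h
        have := hmax N hNPhi
        linarith
      set A : Finset (Fin p) := Finset.univ.filter (fun i => Reach X0 M i0 (Sum.inl i)) with hA
      set B : Finset (Fin q) := Finset.univ.filter (fun j => ¬ Reach X0 M i0 (Sum.inr j)) with hB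
      have hBc : ∀ j, j ∈ Bᶜ ↔ Reach X0 M i0 (Sum.inr j) := by
        intro j; simp [hB]
      refine ⟨A, B, ?_, ?_⟩
      · intro i hi j hj
        simp only [hA, Finset.mem_filter, Finset.mem_univ, true_and] at hi
        simp only [hB, Finset.mem_filter, Finset.mem_univ, true_and] at hj
        by_contra h
        exact hj (Reach.fwd hi (lt_of_le_of_ne (hX0.1 i j) (Ne.symm h)))
      · have hMzero : ∀ j ∈ Bᶜ, ∀ i, i ∉ A → M i j = 0 := by
          intro j hj i hi
          by_contra h
          have hpos : 0 < M i j := lt_of_le_of_ne (hM0 i j) (Ne.symm h)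
          refine hi ?_
          simp only [hA, Finset.mem_filter, Finset.mem_univ, true_and]
          exact Reach.bwd ((hBc j).mp hj) hpos
        calc ∑ j ∈ Bᶜ, b j = ∑ j ∈ Bᶜ, colSum M j :=
              Finset.sum_congr rfl fun j hj => (hsat j ((hBc j).mp hj)).symm
          _ = ∑ j ∈ Bᶜ, ∑ i ∈ A, M i j := by
              refine Finset.sum_congr rfl fun j hj => ?_
              unfold IPFP.colSum
              exact (Finset.sum_subset (Finset.subset_univ A)
                (fun i _ hi => hMzero j hj i hi)).symm
          _ = ∑ i ∈ A, ∑ j ∈ Bᶜ, M i j := Finset.sum_comm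
          _ ≤ ∑ i ∈ A, rowSum M i := by
              refine Finset.sum_le_sum fun i _ => ?_
              unfold IPFP.rowSum
              exact Finset.sum_le_sum_of_subset_of_nonneg (Finset.subset_univ _)
                (fun j _ _ => hM0 i j)
          _ < ∑ i ∈ A, a i := by
              refine Finset.sum_lt_sum (fun i _ => hMr i) ⟨i0, ?_, hi0⟩
              simp only [hA, Finset.mem_filter, Finset.mem_univ, true_and]
              exact Reach.start
  · rintro ⟨A, B, hz, hlt⟩ ⟨S, ⟨⟨⟨hS0, _, _⟩, hSrow, hScol⟩, hsupp⟩⟩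
    have hSz : ∀ i ∈ A, ∀ j ∈ B, S i j = 0 := by
      intro i hi j hj
      by_contra h
      have hpos : 0 < S i j := lt_of_le_of_ne (hS0 i j) (Ne.symm h)
      exact (hsupp i j hpos).ne' (hz i hi j hj)
    have h1 : ∑ i ∈ A, a i = ∑ i ∈ A, ∑ j ∈ Bᶜ, S i j := by
      refine Finset.sum_congr rfl fun i hi => ?_
      rw [← hSrow i]
      unfold IPFP.rowSum
      refine (Finset.sum_subset (Finset.subset_univ Bᶜ) ?_).symm
      intro j _ hj
      simp only [Finset.mem_compl, not_not] at hj
      exact hSz i hi j hj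
    have h2 : ∑ i ∈ A, ∑ j ∈ Bᶜ, S i j ≤ ∑ j ∈ Bᶜ, b j := by
      rw [show ∑ i ∈ A, ∑ j ∈ Bᶜ, S i j = ∑ j ∈ Bᶜ, ∑ i ∈ A, S i j from Finset.sum_comm]
      refine Finset.sum_le_sum fun j _ => ?_
      rw [← hScol j]
      unfold IPFP.colSum
      exact Finset.sum_le_sum_of_subset_of_nonneg (Finset.subset_univ _)
        (fun i _ _ => hS0 i j)
    linarith
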